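/- Let a >= 3 be an integer, and let S be the set of (a-2)-tuples of nonnegative integers consisting of the tuple (2, 1, 1, ..., 1) (first coordinate 2, all remaining a-3 coordinates 1), the tuples which, for some i with 2 <= i <= a-2, have coordinates 1 through i-1 equal to 0, coordinate i equal to i+1, and coordinates i+1 through a-2 equal to 1, and the elements of Delta^{a-2}. Then the down-closure of S has exactly 3*2^{a-2} - a elements. -/

import Mathlib

namespace TMEnum

/-- `Delta c`: the set of `c`-tuples of naturals with value `2` in exactly one
coordinate and `0` in all others. -/
def Delta (c : ℕ) : Set (Fin c → ℕ) :=
  {δ | ∃ i : Fin c, δ = fun j => if j = i then 2 else 0}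

/-- The down-closure of a set `M` of `c`-tuples of naturals: all tuples dominated
coordinatewise by some element of `M`. -/
def downClosure {c : ℕ} (M : Set (Fin c → ℕ)) : Set (Fin c → ℕ) :=
  {χ | ∃ δ ∈ M, ∀ i, χ i ≤ δ i}

private def FA (n : ℕ) : Finset (Fin n → ℕ) :=
  Fintype.piFinset (fun j => if j.val = 0 then Finset.range 3 else Finset.range 2)

private def FB (n k : ℕ) : Finset (Fin n → ℕ) :=
  Fintype.piFinset (fun j =>
    if j.val < k then {0} else if j.val = k then Finset.Icc 2 (k+2) else Finset.range 2)

private lemma mem_FA {n : ℕ} {t : Fin n → ℕ} :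
    t ∈ FA n ↔ ∀ j : Fin n, (j.val = 0 → t j ≤ 2) ∧ (j.val ≠ 0 → t j ≤ 1) := by
  simp only [FA, Fintype.mem_piFinset]
  constructor
  · intro h j
    have := h j
    split_ifs at this with h0 <;> simp only [Finset.mem_range] at this
    · exact ⟨fun _ => by omega, fun h' => absurd h0 h'⟩
    · exact ⟨fun h' => absurd h' h0, fun _ => by omega⟩
  · intro h j
    obtain ⟨h1, h2⟩ := h j
    split_ifs with h0 <;> simp only [Finset.mem_range]
    · have := h1 h0; omega
    · have := h2 h0; omega

private lemma mem_FB {n k : ℕ} {t : Fin n → ℕ} :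
    t ∈ FB n k ↔ ∀ j : Fin n, (j.val < k → t j = 0) ∧
      (j.val = k → 2 ≤ t j ∧ t j ≤ k + 2) ∧ (k < j.val → t j ≤ 1) := by
  simp only [FB, Fintype.mem_piFinset]
  constructor
  · intro h j
    have := h j
    split_ifs at this with h0 h1 <;>
      simp only [Finset.mem_singleton, Finset.mem_Icc, Finset.mem_range] at this
    · exact ⟨fun _ => this, fun h' => by omega, fun h' => by omega⟩
    · exact ⟨fun h' => by omega, fun _ => this, fun h' => by omega⟩
    · exact ⟨fun h' => absurd h' h0, fun h' => absurd h' h1, fun _ => by omega⟩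
  · intro h j
    obtain ⟨h1, h2, h3⟩ := h j
    split_ifs with h0 hk <;>
      simp only [Finset.mem_singleton, Finset.mem_Icc, Finset.mem_range]
    · exact h1 h0
    · exact h2 hk
    · have := h3 (by omega); omega

private lemma dc_eq (n : ℕ) (hn : 1 ≤ n) :
    downClosure
      ({fun j : Fin n => if j.val = 0 then 2 else 1}
        ∪ {t : Fin n → ℕ | ∃ i : ℕ, 2 ≤ i ∧ i ≤ n ∧
            t = fun j : Fin n =>
              if j.val + 1 < i then 0 else if j.val + 1 = i then i + 1 else 1}
        ∪ Delta n)
    = ↑(FA n ∪ (Finset.Ico 1 n).biUnion (FB n)) := by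
  ext t
  simp only [downClosure, Set.mem_setOf_eq, Finset.coe_union, Set.mem_union,
    Finset.mem_coe, Finset.mem_biUnion, Finset.mem_Ico, Set.mem_singleton_iff,
    Set.mem_insert_iff, Delta]
  constructor
  · rintro ⟨δ, hδ, hle⟩
    rcases hδ with (rfl | ⟨i, hi2, hin, rfl⟩) | ⟨i, rfl⟩
    · -- dominated by the (2,1,...,1) tuple
      left
      rw [mem_FA]
      intro j
      have := hle j
      constructor <;> intro h0 <;> simp [h0] at this <;> omega
    · -- dominated by B_i
      have hi1 : i - 1 < n := by omega
      by_cases ht : t ⟨i - 1, hi1⟩ ≤ 1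
      · left
        rw [mem_FA]
        intro j
        have := hle j
        constructor <;> intro h0
        · have : j.val + 1 < i := by omega
          simp [this] at *
          omega
        · by_cases hj : j.val + 1 < i
          · simp [hj] at this; omega
          · by_cases hj2 : j.val + 1 = i
            · have : j = ⟨i - 1, hi1⟩ := by ext; simp; omega
              rw [this]; exact ht
            · simp [hj, hj2] at this; omega
      · right
        refine ⟨i - 1, ⟨by omega, by omega⟩, ?_⟩
        rw [mem_FB]
        intro j
        have hj := hle j
        refine ⟨fun h => ?_, fun h => ?_, fun h => ?_⟩
        · have : j.val + 1 < i := by omega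
          simp [this] at hj; omega
        · have h1 : ¬ (j.val + 1 < i) := by omega
          have h2 : j.val + 1 = i := by omega
          have hje : j = ⟨i - 1, hi1⟩ := by ext; simp; omega
          simp [h1, h2] at hj
          rw [hje]
          constructor
          · omega
          · rw [← hje]; omega
        · have h1 : ¬ (j.val + 1 < i) := by omega
          have h2 : ¬ (j.val + 1 = i) := by omega
          simp [h1, h2] at hj; omega
    · -- dominated by a Delta element with peak at i
      by_cases hi0 : i.val = 0
      · left
        rw [mem_FA]
        intro j
        have := hle j
        constructor <;> intro h0
        · by_cases hj : j = i
          · subst hj; simp at this; omega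
          · simp [hj] at this; omega
        · have hj : j ≠ i := by intro h; rw [h] at h0; exact h0 hi0
          simp [hj] at this; omega
      · by_cases ht : t i ≤ 1
        · left
          rw [mem_FA]
          intro j
          have := hle j
          constructor <;> intro h0
          · by_cases hj : j = i
            · subst hj; simp at this; omega
            · simp [hj] at this; omega
          · by_cases hj : j = i
            · subst hj; exact ht
            · simp [hj] at this; omega
        · right
          refine ⟨i.val, ⟨by omega, i.isLt⟩, ?_⟩
          rw [mem_FB]
          intro j
          have hj := hle j
          refine ⟨fun h => ?_, fun h => ?_, fun h => ?_⟩
          · have hne : j ≠ i := by intro he; rw [he] at h; omega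
            simp [hne] at hj; omega
          · have he : j = i := by ext; exact h
            rw [he]
            simp [he] at hj
            omega
          · have hne : j ≠ i := by intro he; rw [he] at h; omega
            simp [hne] at hj; omega
  · rintro (hA | ⟨k, ⟨hk1, hkn⟩, hB⟩)
    · refine ⟨_, Or.inl (Or.inl rfl), ?_⟩
      rw [mem_FA] at hA
      intro j
      obtain ⟨h1, h2⟩ := hA j
      by_cases h0 : j.val = 0 <;> simp [h0] <;> [exact h1 h0; exact h2 h0]
    · refine ⟨_, Or.inl (Or.inr ⟨k + 1, by omega, by omega, rfl⟩), ?_⟩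
      rw [mem_FB] at hB
      intro j
      obtain ⟨h1, h2, h3⟩ := hB j
      by_cases hlt : j.val < k
      · simp [show j.val + 1 < k + 1 by omega]
        have := h1 hlt; omega
      · by_cases heq : j.val = k
        · simp [show ¬ (j.val + 1 < k + 1) by omega, show j.val + 1 = k + 1 by omega]
          have := h2 heq; omega
        · simp [show ¬ (j.val + 1 < k + 1) by omega, show ¬ (j.val + 1 = k + 1) by omega]
          simpa [heq] using h3 (by omega)

private lemma card_FA (m : ℕ) : (FA (m + 1)).card = 3 * 2 ^ m := by
  rw [FA, Fintype.card_piFinset, Fin.prod_univ_succ]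
  simp [Fin.val_succ]

private lemma card_FB {n k : ℕ} (hk : k < n) :
    (FB n k).card = (k + 1) * 2 ^ (n - 1 - k) := by
  rw [FB, Fintype.card_piFinset]
  have hc : ∀ j : Fin n,
      ((if j.val < k then ({0} : Finset ℕ) else if j.val = k then Finset.Icc 2 (k+2)
        else Finset.range 2)).card
      = (fun m => if m < k then 1 else if m = k then k + 1 else 2) j.val := by
    intro j
    by_cases hlt : j.val < k
    · simp [hlt]
    · by_cases heq : j.val = k
      · simp [hlt, heq, Nat.card_Icc]
      · simp [hlt, heq]
  rw [Finset.prod_congr rfl (fun j _ => hc j),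
    Fin.prod_univ_eq_prod_range (fun m => if m < k then 1 else if m = k then k + 1 else 2) n,
    Finset.range_eq_Ico,
    ← Finset.prod_Ico_consecutive _ (Nat.zero_le (k+1)) (by omega : k + 1 ≤ n),
    ← Finset.range_eq_Ico, Finset.prod_range_succ]
  have h1 : ∏ m ∈ Finset.range k,
      (if m < k then 1 else if m = k then k + 1 else 2) = 1 := by
    apply Finset.prod_eq_one
    intro m hm
    simp [Finset.mem_range.mp hm]
  have h2 : ∏ m ∈ Finset.Ico (k+1) n,
      (if m < k then 1 else if m = k then k + 1 else 2) = 2 ^ (n - 1 - k) := by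
    rw [Finset.prod_congr rfl (g := fun _ => 2) (fun m hm => by
      rw [Finset.mem_Ico] at hm
      simp [show ¬ m < k by omega, show m ≠ k by omega]),
      Finset.prod_const, Nat.card_Ico]
    congr 1
    omega
  rw [h1, h2]
  simp

private lemma disj_AB {n k : ℕ} (hk1 : 1 ≤ k) (hkn : k < n) :
    Disjoint (FA n) (FB n k) := by
  rw [Finset.disjoint_left]
  intro t hA hB
  rw [FA, Fintype.mem_piFinset] at hA
  rw [FB, Fintype.mem_piFinset] at hB
  have hA' := hA ⟨k, hkn⟩
  have hB' := hB ⟨k, hkn⟩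
  simp [show k ≠ 0 by omega] at hA' hB'
  omega

private lemma disj_BB {n : ℕ} {k k' : ℕ} (hk : k < n) (hk' : k' < n) (hne : k ≠ k') :
    Disjoint (FB n k) (FB n k') := by
  wlog h : k < k' generalizing k k'
  · exact (this hk' hk hne.symm (by omega)).symm
  rw [Finset.disjoint_left]
  intro t h1 h2
  rw [FB, Fintype.mem_piFinset] at h1 h2
  have ha := h1 ⟨k, hk⟩
  have hb := h2 ⟨k, hk⟩
  simp [show ¬ (k < k) by omega, h] at ha hb
  omega

private lemma sum_lemma (n : ℕ) (hn : 1 ≤ n) :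
    3 * 2 ^ (n - 1) + ∑ k ∈ Finset.Ico 1 n, (k + 1) * 2 ^ (n - 1 - k)
      = 3 * 2 ^ n - (n + 2) := by
  induction n, hn using Nat.le_induction with
  | base => simp
  | succ n hn ih =>
    rw [Finset.sum_Ico_succ_top hn]
    have hs : ∑ k ∈ Finset.Ico 1 n, (k + 1) * 2 ^ (n + 1 - 1 - k)
        = 2 * ∑ k ∈ Finset.Ico 1 n, (k + 1) * 2 ^ (n - 1 - k) := by
      rw [Finset.mul_sum]
      apply Finset.sum_congr rfl
      intro k hk
      rw [Finset.mem_Ico] at hk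
      rw [show n + 1 - 1 - k = (n - 1 - k) + 1 by omega, pow_succ]
      ring
    rw [hs]
    have hp : n < 2 ^ n := Nat.lt_two_pow_self
    have h1 : (1:ℕ) ≤ 2 ^ n := Nat.one_le_two_pow
    have h2 : 2 ^ n = 2 ^ (n - 1) * 2 := by
      rw [← pow_succ]; congr 1; omega
    simp only [show n + 1 - 1 = n from rfl, Nat.sub_self, pow_zero, pow_succ, mul_one]
    omega

private lemma helper (n : ℕ) (hn : 1 ≤ n) :
    (downClosure
      ({fun j : Fin n => if j.val = 0 then 2 else 1}
        ∪ {t : Fin n → ℕ | ∃ i : ℕ, 2 ≤ i ∧ i ≤ n ∧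
            t = fun j : Fin n =>
              if j.val + 1 < i then 0 else if j.val + 1 = i then i + 1 else 1}
        ∪ Delta n)).ncard = 3 * 2 ^ n - (n + 2) := by
  rw [dc_eq n hn, Set.ncard_coe_finset]
  rw [Finset.card_union_of_disjoint (by
    rw [Finset.disjoint_biUnion_right]
    intro k hk
    rw [Finset.mem_Ico] at hk
    exact disj_AB hk.1 hk.2)]
  rw [Finset.card_biUnion (fun k hk k' hk' hne => by
    rw [Finset.mem_coe, Finset.mem_Ico] at hk hk'
    exact disj_BB hk.2 hk'.2 hne)]
  obtain ⟨m, rfl⟩ := Nat.exists_eq_add_of_le hn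
  rw [show 1 + m = m + 1 from by omega]
  rw [card_FA m]
  have hsum : ∑ k ∈ Finset.Ico 1 (m + 1), (FB (m + 1) k).card
      = ∑ k ∈ Finset.Ico 1 (m + 1), (k + 1) * 2 ^ (m + 1 - 1 - k) := by
    apply Finset.sum_congr rfl
    intro k hk
    rw [Finset.mem_Ico] at hk
    exact card_FB hk.2
  rw [hsum, ← sum_lemma (m + 1) (by omega)]
  rfl

theorem down_closure_complete_card (a : ℕ) (ha : 3 ≤ a) :
    (downClosure
      ({fun j : Fin (a - 2) => if j.val = 0 then 2 else 1}
        ∪ {t : Fin (a - 2) → ℕ | ∃ i : ℕ, 2 ≤ i ∧ i ≤ a - 2 ∧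
            t = fun j : Fin (a - 2) =>
              if j.val + 1 < i then 0 else if j.val + 1 = i then i + 1 else 1}
        ∪ Delta (a - 2))).ncard = 3 * 2 ^ (a - 2) - a := by
  obtain ⟨c, rfl⟩ := Nat.exists_eq_add_of_le' ha
  exact helper (c + 1) (by omega)

end TMEnum
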